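/- Let $(\Omega, d)$ be a finite metric space, $P$ a stochastic matrix, and $p \in [1,\infty)$. If $W_p(\delta_x P, \delta_y P) \leq (1-K)d(x,y)$ for all $x, y \in \Omega$, then for any probability measures $\mu, \nu$ on $\Omega$ and any $n \geq 0$, $W_p(\mu P^n, \nu P^n) \leq (1-K)^n W_p(\mu, \nu)$, where $K \leq 1$. -/

import Mathlib

theorem stmt15 {Ω : Type*} [Fintype Ω] [Nonempty Ω]
    (d : Ω → Ω → ℝ)
    (hd_nonneg : ∀ x y, 0 ≤ d x y)
    (hd_eq : ∀ x y, d x y = 0 ↔ x = y)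
    (hd_symm : ∀ x y, d x y = d y x)
    (hd_tri : ∀ x y z, d x z ≤ d x y + d y z)
    (P : Ω → Ω → ℝ)
    (hP : (∀ x y, 0 ≤ P x y) ∧ ∀ x, ∑ y, P x y = 1)
    (p : ℝ) (hp : 1 ≤ p)
    (W : (Ω → ℝ) → (Ω → ℝ) → ℝ)
    (hW : ∀ μ ν, W μ ν = (sInf {r : ℝ | ∃ Γ : Ω → Ω → ℝ,
      (∀ v w, 0 ≤ Γ v w) ∧ (∀ v, ∑ w, Γ v w = μ v) ∧ (∀ w, ∑ v, Γ v w = ν w) ∧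
      r = ∑ v, ∑ w, Γ v w * d v w ^ p}) ^ (1 / p))
    (K : ℝ) (hK1 : K ≤ 1)
    (hK : ∀ x y : Ω, W (fun v => P x v) (fun v => P y v) ≤ (1 - K) * d x y)
    (μ ν : Ω → ℝ)
    (hμ : (∀ x, 0 ≤ μ x) ∧ ∑ x, μ x = 1)
    (hν : (∀ x, 0 ≤ ν x) ∧ ∑ x, ν x = 1)
    (step : (Ω → ℝ) → (Ω → ℝ))
    (hstep : ∀ ρ, step ρ = fun w => ∑ v, ρ v * P v w) :
    ∀ n : ℕ, W (step^[n] μ) (step^[n] ν) ≤ (1 - K) ^ n * W μ ν := by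
  obtain ⟨hPnn, hPsum⟩ := hP
  have hp0 : (0:ℝ) < p := lt_of_lt_of_le one_pos hp
  have h1K : (0:ℝ) ≤ 1 - K := by linarith
  set C : (Ω → ℝ) → (Ω → ℝ) → Set ℝ := fun μ ν => {r : ℝ | ∃ Γ : Ω → Ω → ℝ,
      (∀ v w, 0 ≤ Γ v w) ∧ (∀ v, ∑ w, Γ v w = μ v) ∧ (∀ w, ∑ v, Γ v w = ν w) ∧
      r = ∑ v, ∑ w, Γ v w * d v w ^ p} with hC
  have hWC : ∀ μ ν, W μ ν = (sInf (C μ ν)) ^ (1/p) := hW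
  have hCnonneg : ∀ μ ν : Ω → ℝ, ∀ r ∈ C μ ν, 0 ≤ r := by
    rintro μ ν r ⟨Γ, hΓnn, -, -, rfl⟩
    refine Finset.sum_nonneg fun v _ => Finset.sum_nonneg fun w _ =>
      mul_nonneg (hΓnn v w) (Real.rpow_nonneg (hd_nonneg v w) p)
  have hCbdd : ∀ μ ν, BddBelow (C μ ν) := fun μ ν => ⟨0, fun r hr => hCnonneg μ ν r hr⟩
  have hInfnn : ∀ μ ν, 0 ≤ sInf (C μ ν) := fun μ ν => Real.sInf_nonneg (hCnonneg μ ν)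
  have hCne : ∀ μ ν : Ω → ℝ, (∀ x, 0 ≤ μ x) → ∑ x, μ x = 1 → (∀ x, 0 ≤ ν x) →
      ∑ x, ν x = 1 → (C μ ν).Nonempty := by
    intro μ ν hμnn hμs hνnn hνs
    refine ⟨_, fun v w => μ v * ν w, fun v w => mul_nonneg (hμnn v) (hνnn w), ?_, ?_, rfl⟩
    · intro v; rw [← Finset.mul_sum, hνs, mul_one]
    · intro w; rw [← Finset.sum_mul, hμs, one_mul]
  -- the pointwise bound on sInf for Dirac measures
  have hsxy : ∀ x y : Ω, sInf (C (fun v => P x v) (fun v => P y v)) ≤ ((1-K) * d x y) ^ p := by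
    intro x y
    have h1 : ((sInf (C (fun v => P x v) (fun v => P y v))) ^ (1/p)) ^ p
        = sInf (C (fun v => P x v) (fun v => P y v)) := by
      rw [← Real.rpow_mul (hInfnn _ _), one_div_mul_cancel hp0.ne', Real.rpow_one]
    rw [← h1]
    refine Real.rpow_le_rpow (Real.rpow_nonneg (hInfnn _ _) _) ?_ hp0.le
    rw [← hWC]
    exact hK x y
  -- swapping four sums
  have sum4 : ∀ f : Ω → Ω → Ω → Ω → ℝ,
      ∑ v, ∑ w, ∑ x, ∑ y, f v w x y = ∑ x, ∑ y, ∑ v, ∑ w, f v w x y := by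
    intro f
    calc ∑ v, ∑ w, ∑ x, ∑ y, f v w x y
        = ∑ v, ∑ x, ∑ w, ∑ y, f v w x y :=
          Finset.sum_congr rfl fun v _ => Finset.sum_comm
      _ = ∑ x, ∑ v, ∑ w, ∑ y, f v w x y := Finset.sum_comm
      _ = ∑ x, ∑ v, ∑ y, ∑ w, f v w x y :=
          Finset.sum_congr rfl fun x _ => Finset.sum_congr rfl fun v _ => Finset.sum_comm
      _ = ∑ x, ∑ y, ∑ v, ∑ w, f v w x y :=
          Finset.sum_congr rfl fun x _ => Finset.sum_comm
  have hAnn : 0 ≤ (1-K) ^ p := Real.rpow_nonneg h1K p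
  -- one-step contraction at the level of sInf
  have key : ∀ μ ν : Ω → ℝ, (∀ x, 0 ≤ μ x) → ∑ x, μ x = 1 → (∀ x, 0 ≤ ν x) → ∑ x, ν x = 1 →
      sInf (C (step μ) (step ν)) ≤ (1-K)^p * sInf (C μ ν) := by
    intro μ ν hμnn hμs hνnn hνs
    apply le_of_forall_pos_le_add
    intro ε hε
    set δ := ε / ((1-K)^p + 1) with hδdef
    have hδ : 0 < δ := div_pos hε (by linarith)
    obtain ⟨r, hrmem, hrlt⟩ := Real.lt_sInf_add_pos (hCne μ ν hμnn hμs hνnn hνs) hδ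
    obtain ⟨Γ, hΓnn, hΓ1, hΓ2, rfl⟩ := hrmem
    have hx : ∀ x y : Ω, ∃ G : Ω → Ω → ℝ, (∀ v w, 0 ≤ G v w) ∧ (∀ v, ∑ w, G v w = P x v) ∧
        (∀ w, ∑ v, G v w = P y w) ∧ ∑ v, ∑ w, G v w * d v w ^ p < ((1-K) * d x y)^p + δ := by
      intro x y
      obtain ⟨s, hsmem, hslt⟩ := Real.lt_sInf_add_pos
        (hCne (fun v => P x v) (fun v => P y v)
          (fun v => hPnn x v) (hPsum x) (fun v => hPnn y v) (hPsum y)) hδ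
      obtain ⟨G, hGnn, hG1, hG2, rfl⟩ := hsmem
      exact ⟨G, hGnn, hG1, hG2, lt_of_lt_of_le hslt (add_le_add_left (hsxy x y) δ)⟩
    choose G hGnn hG1 hG2 hGcost using hx
    set Γ' : Ω → Ω → ℝ := fun v w => ∑ x, ∑ y, Γ x y * G x y v w with hΓ'def
    have hΓ'nn : ∀ v w, 0 ≤ Γ' v w := fun v w =>
      Finset.sum_nonneg fun x _ => Finset.sum_nonneg fun y _ =>
        mul_nonneg (hΓnn x y) (hGnn x y v w)
    have hΓtot : ∑ x, ∑ y, Γ x y = 1 := by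
      rw [Finset.sum_congr rfl fun x _ => hΓ1 x, hμs]
    have m1 : ∀ v, ∑ w, Γ' v w = step μ v := by
      intro v
      rw [hstep]
      calc ∑ w, ∑ x, ∑ y, Γ x y * G x y v w
          = ∑ x, ∑ w, ∑ y, Γ x y * G x y v w := Finset.sum_comm
        _ = ∑ x, ∑ y, ∑ w, Γ x y * G x y v w :=
            Finset.sum_congr rfl fun x _ => Finset.sum_comm
        _ = ∑ x, ∑ y, Γ x y * P x v := by
            refine Finset.sum_congr rfl fun x _ => Finset.sum_congr rfl fun y _ => ?_
            rw [← Finset.mul_sum, hG1 x y v]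
        _ = ∑ x, μ x * P x v := by
            refine Finset.sum_congr rfl fun x _ => ?_
            rw [← Finset.sum_mul, hΓ1 x]
    have m2 : ∀ w, ∑ v, Γ' v w = step ν w := by
      intro w
      rw [hstep]
      calc ∑ v, ∑ x, ∑ y, Γ x y * G x y v w
          = ∑ x, ∑ v, ∑ y, Γ x y * G x y v w := Finset.sum_comm
        _ = ∑ x, ∑ y, ∑ v, Γ x y * G x y v w :=
            Finset.sum_congr rfl fun x _ => Finset.sum_comm
        _ = ∑ x, ∑ y, Γ x y * P y w := by
            refine Finset.sum_congr rfl fun x _ => Finset.sum_congr rfl fun y _ => ?_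
            rw [← Finset.mul_sum, hG2 x y w]
        _ = ∑ y, ∑ x, Γ x y * P y w := Finset.sum_comm
        _ = ∑ y, ν y * P y w := by
            refine Finset.sum_congr rfl fun y _ => ?_
            rw [← Finset.sum_mul, hΓ2 y]
    have e1 : ∑ v, ∑ w, Γ' v w * d v w ^ p
        = ∑ x, ∑ y, Γ x y * ∑ v, ∑ w, G x y v w * d v w ^ p := by
      calc ∑ v, ∑ w, (∑ x, ∑ y, Γ x y * G x y v w) * d v w ^ p
          = ∑ v, ∑ w, ∑ x, ∑ y, Γ x y * G x y v w * d v w ^ p := by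
            simp_rw [Finset.sum_mul]
        _ = ∑ x, ∑ y, ∑ v, ∑ w, Γ x y * G x y v w * d v w ^ p := sum4 _
        _ = ∑ x, ∑ y, Γ x y * ∑ v, ∑ w, G x y v w * d v w ^ p := by
            simp_rw [mul_assoc, ← Finset.mul_sum]
    have hcost : ∑ v, ∑ w, Γ' v w * d v w ^ p
        ≤ (1-K)^p * (∑ v, ∑ w, Γ v w * d v w ^ p) + δ := by
      rw [e1]
      calc ∑ x, ∑ y, Γ x y * ∑ v, ∑ w, G x y v w * d v w ^ p
          ≤ ∑ x, ∑ y, Γ x y * (((1-K) * d x y)^p + δ) := by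
            refine Finset.sum_le_sum fun x _ => Finset.sum_le_sum fun y _ =>
              mul_le_mul_of_nonneg_left (hGcost x y).le (hΓnn x y)
        _ = ∑ x, ∑ y, ((1-K)^p * (Γ x y * d x y ^ p) + δ * Γ x y) := by
            refine Finset.sum_congr rfl fun x _ => Finset.sum_congr rfl fun y _ => ?_
            rw [Real.mul_rpow h1K (hd_nonneg x y)]; ring
        _ = (1-K)^p * (∑ x, ∑ y, Γ x y * d x y ^ p) + δ * (∑ x, ∑ y, Γ x y) := by
            simp_rw [Finset.sum_add_distrib, ← Finset.mul_sum]
        _ = (1-K)^p * (∑ x, ∑ y, Γ x y * d x y ^ p) + δ := by rw [hΓtot, mul_one]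
    have hmem : (∑ v, ∑ w, Γ' v w * d v w ^ p) ∈ C (step μ) (step ν) :=
      ⟨Γ', hΓ'nn, m1, m2, rfl⟩
    have hle := csInf_le (hCbdd _ _) hmem
    have hδε : (1-K)^p * δ + δ ≤ ε := by
      have hne : (1-K)^p + 1 ≠ 0 := by positivity
      have : ((1-K)^p + 1) * δ = ε := by
        rw [hδdef, mul_div_cancel₀ _ hne]
      linarith
    calc sInf (C (step μ) (step ν)) ≤ ∑ v, ∑ w, Γ' v w * d v w ^ p := hle
      _ ≤ (1-K)^p * (∑ v, ∑ w, Γ v w * d v w ^ p) + δ := hcost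
      _ ≤ (1-K)^p * (sInf (C μ ν) + δ) + δ :=
          add_le_add_left (mul_le_mul_of_nonneg_left hrlt.le hAnn) δ
      _ = (1-K)^p * sInf (C μ ν) + ((1-K)^p * δ + δ) := by ring
      _ ≤ (1-K)^p * sInf (C μ ν) + ε := add_le_add_right hδε _
  -- one-step contraction at the level of W
  have keyW : ∀ μ ν : Ω → ℝ, (∀ x, 0 ≤ μ x) → ∑ x, μ x = 1 → (∀ x, 0 ≤ ν x) → ∑ x, ν x = 1 →
      W (step μ) (step ν) ≤ (1-K) * W μ ν := by
    intro μ ν hμnn hμs hνnn hνs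
    rw [hWC, hWC]
    calc (sInf (C (step μ) (step ν)))^(1/p)
        ≤ ((1-K)^p * sInf (C μ ν))^(1/p) :=
          Real.rpow_le_rpow (hInfnn _ _) (key μ ν hμnn hμs hνnn hνs) (by positivity)
      _ = ((1-K)^p)^(1/p) * (sInf (C μ ν))^(1/p) := Real.mul_rpow hAnn (hInfnn _ _)
      _ = (1-K) * (sInf (C μ ν))^(1/p) := by
          rw [← Real.rpow_mul h1K, mul_one_div_cancel hp0.ne', Real.rpow_one]
  -- probability measures are preserved by step
  have stepprob : ∀ ρ : Ω → ℝ, (∀ x, 0 ≤ ρ x) → ∑ x, ρ x = 1 →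
      (∀ x, 0 ≤ step ρ x) ∧ ∑ x, step ρ x = 1 := by
    intro ρ h1 h2
    rw [hstep]
    constructor
    · intro x; exact Finset.sum_nonneg fun v _ => mul_nonneg (h1 v) (hPnn v x)
    · rw [Finset.sum_comm]
      calc ∑ v, ∑ w, ρ v * P v w = ∑ v, ρ v := by
            refine Finset.sum_congr rfl fun v _ => ?_
            rw [← Finset.mul_sum, hPsum, mul_one]
        _ = 1 := h2
  have iterprob : ∀ ρ : Ω → ℝ, (∀ x, 0 ≤ ρ x) ∧ ∑ x, ρ x = 1 → ∀ n : ℕ,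
      (∀ x, 0 ≤ step^[n] ρ x) ∧ ∑ x, step^[n] ρ x = 1 := by
    intro ρ hρ n
    induction n with
    | zero => simpa using hρ
    | succ n ih =>
      rw [Function.iterate_succ_apply']
      exact stepprob _ ih.1 ih.2
  intro n
  induction n with
  | zero => simp
  | succ n ih =>
    obtain ⟨hμn1, hμn2⟩ := iterprob μ hμ n
    obtain ⟨hνn1, hνn2⟩ := iterprob ν hν n
    rw [Function.iterate_succ_apply', Function.iterate_succ_apply']
    calc W (step (step^[n] μ)) (step (step^[n] ν))
        ≤ (1-K) * W (step^[n] μ) (step^[n] ν) := keyW _ _ hμn1 hμn2 hνn1 hνn2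
      _ ≤ (1-K) * ((1-K)^n * W μ ν) := mul_le_mul_of_nonneg_left ih h1K
      _ = (1-K)^(n+1) * W μ ν := by ring
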